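/- arXiv:2108.05785 — 4 statements merged into one kernel-verified Lean document; each statement's English description precedes it below -/
import Mathlib

section
/- For every real p ≠ 0 and every s > 2, there exist a dimension n and n×n complex matrices K₁, K₂ such that the functional Ψ(A) := Tr |K₁ A^p K₂|^s is not concave on the set of positive definite n×n complex matrices; i.e., there exist positive definite A₁, A₂ and λ ∈ [0,1] with Ψ(λA₁+(1−λ)A₂) < λΨ(A₁) + (1−λ)Ψ(A₂). -/
open Matrix
open scoped ComplexOrder

/-- Real power of a Hermitian matrix, defined via the spectral decomposition
(and `0` for non-Hermitian matrices). -/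
noncomputable def mpow {n : Type*} [Fintype n] [DecidableEq n]
    (M : Matrix n n ℂ) (t : ℝ) : Matrix n n ℂ :=
  if h : M.IsHermitian then
    (h.eigenvectorUnitary : Matrix n n ℂ) *
      Matrix.diagonal (fun i => ((h.eigenvalues i ^ t : ℝ) : ℂ)) *
      (star (h.eigenvectorUnitary : Matrix n n ℂ))
  else 0

/-- `Tr |X|^s := Tr ((X^* X)^{s/2})`. -/
noncomputable def trPow {n : Type*} [Fintype n] [DecidableEq n]
    (X : Matrix n n ℂ) (s : ℝ) : ℝ :=
  (mpow (Xᴴ * X) (s / 2)).trace.re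

lemma eig_mem {n : Type*} [Fintype n] [DecidableEq n]
    {M : Matrix n n ℂ} (hM : M.IsHermitian) (α β : ℝ)
    (hq : (M - (α : ℂ) • 1) * (M - (β : ℂ) • 1) = 0) (i : n) :
    hM.eigenvalues i = α ∨ hM.eigenvalues i = β := by
  have hUU : (hM.eigenvectorUnitary : Matrix n n ℂ) * star (hM.eigenvectorUnitary : Matrix n n ℂ) = 1 :=
    Matrix.mem_unitaryGroup_iff.mp hM.eigenvectorUnitary.2
  have hUU' : star (hM.eigenvectorUnitary : Matrix n n ℂ) * (hM.eigenvectorUnitary : Matrix n n ℂ) = 1 :=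
    Matrix.mem_unitaryGroup_iff'.mp hM.eigenvectorUnitary.2
  have hDα : star (hM.eigenvectorUnitary : Matrix n n ℂ) * (M - (α : ℂ) • 1) * (hM.eigenvectorUnitary : Matrix n n ℂ)
      = diagonal (RCLike.ofReal ∘ hM.eigenvalues) - (α : ℂ) • 1 := by
    rw [Matrix.mul_sub, Matrix.sub_mul, (by have h := hM.conjStarAlgAut_star_eigenvectorUnitary; simpa only [Unitary.conjStarAlgAut_star_apply, Unitary.coe_star] using h : star (hM.eigenvectorUnitary : Matrix n n ℂ) * M * (hM.eigenvectorUnitary : Matrix n n ℂ) = diagonal (RCLike.ofReal ∘ hM.eigenvalues))]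
    congr 1
    rw [Matrix.mul_smul, mul_one, Matrix.smul_mul, hUU']
  have hDβ : star (hM.eigenvectorUnitary : Matrix n n ℂ) * (M - (β : ℂ) • 1) * (hM.eigenvectorUnitary : Matrix n n ℂ)
      = diagonal (RCLike.ofReal ∘ hM.eigenvalues) - (β : ℂ) • 1 := by
    rw [Matrix.mul_sub, Matrix.sub_mul, (by have h := hM.conjStarAlgAut_star_eigenvectorUnitary; simpa only [Unitary.conjStarAlgAut_star_apply, Unitary.coe_star] using h : star (hM.eigenvectorUnitary : Matrix n n ℂ) * M * (hM.eigenvectorUnitary : Matrix n n ℂ) = diagonal (RCLike.ofReal ∘ hM.eigenvalues))]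
    congr 1
    rw [Matrix.mul_smul, mul_one, Matrix.smul_mul, hUU']
  have key : ((diagonal (RCLike.ofReal ∘ hM.eigenvalues) : Matrix n n ℂ) - (α : ℂ) • 1) *
      ((diagonal (RCLike.ofReal ∘ hM.eigenvalues) : Matrix n n ℂ) - (β : ℂ) • 1) = 0 := by
    have hux : ∀ X : Matrix n n ℂ, (hM.eigenvectorUnitary : Matrix n n ℂ) *
        (star (hM.eigenvectorUnitary : Matrix n n ℂ) * X) = X := fun X => by
      rw [← Matrix.mul_assoc, hUU, one_mul]
    have key0 : star (hM.eigenvectorUnitary : Matrix n n ℂ) *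
        (((M - (α : ℂ) • 1) * (M - (β : ℂ) • 1)) * (hM.eigenvectorUnitary : Matrix n n ℂ)) = 0 := by
      rw [← Matrix.mul_assoc, hq, Matrix.mul_zero, Matrix.zero_mul]
    rw [← hDα, ← hDβ, ← key0]
    simp only [Matrix.mul_assoc, hux]
  have hdiag : ((diagonal (RCLike.ofReal ∘ hM.eigenvalues) : Matrix n n ℂ) - (α : ℂ) • 1) =
      diagonal (fun j => (hM.eigenvalues j : ℂ) - α) := by
    ext j k
    rcases eq_or_ne j k with rfl | hne
    · simp [Matrix.one_apply]
    · simp [Matrix.diagonal_apply_ne _ hne, Matrix.one_apply_ne hne]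
  have hdiag' : ((diagonal (RCLike.ofReal ∘ hM.eigenvalues) : Matrix n n ℂ) - (β : ℂ) • 1) =
      diagonal (fun j => (hM.eigenvalues j : ℂ) - β) := by
    ext j k
    rcases eq_or_ne j k with rfl | hne
    · simp [Matrix.one_apply]
    · simp [Matrix.diagonal_apply_ne _ hne, Matrix.one_apply_ne hne]
  rw [hdiag, hdiag', diagonal_mul_diagonal] at key
  have hdi := congrFun (congrFun key i) i
  simp only [diagonal_apply_eq, Matrix.zero_apply, mul_eq_zero, sub_eq_zero] at hdi
  rcases hdi with h | h
  · left; exact_mod_cast h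
  · right; exact_mod_cast h

lemma mpow_affine {n : Type*} [Fintype n] [DecidableEq n]
    {M : Matrix n n ℂ} (hM : M.IsHermitian) (t a b : ℝ)
    (h : ∀ i, (hM.eigenvalues i) ^ t = a * hM.eigenvalues i + b) :
    mpow M t = (a : ℂ) • M + (b : ℂ) • 1 := by
  rw [mpow, dif_pos hM]
  have hUU : (hM.eigenvectorUnitary : Matrix n n ℂ) * star (hM.eigenvectorUnitary : Matrix n n ℂ) = 1 :=
    Matrix.mem_unitaryGroup_iff.mp hM.eigenvectorUnitary.2
  have hdiag : (diagonal (fun i => ((hM.eigenvalues i ^ t : ℝ) : ℂ)) : Matrix n n ℂ)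
      = (a : ℂ) • diagonal (RCLike.ofReal ∘ hM.eigenvalues) + (b : ℂ) • 1 := by
    have hfun : (fun i => ((hM.eigenvalues i ^ t : ℝ) : ℂ)) =
        fun i => (a : ℂ) * (hM.eigenvalues i : ℂ) + (b : ℂ) := by
      funext i; rw [h i]; push_cast; ring
    rw [hfun]
    ext j k
    rcases eq_or_ne j k with rfl | hne
    · simp [Matrix.one_apply]
    · simp [Matrix.diagonal_apply_ne _ hne, Matrix.one_apply_ne hne]
  rw [hdiag, Matrix.mul_add, Matrix.add_mul, Matrix.mul_smul, Matrix.smul_mul,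
    Matrix.mul_smul, Matrix.smul_mul, mul_one, hUU]
  congr 1
  congr 1
  exact (hM.spectral_theorem).symm


lemma mpow_of_quadratic {n : Type*} [Fintype n] [DecidableEq n]
    {M : Matrix n n ℂ} (hM : M.IsHermitian) (α β t a b : ℝ)
    (hq : (M - (α : ℂ) • 1) * (M - (β : ℂ) • 1) = 0)
    (hα : α ^ t = a * α + b) (hβ : β ^ t = a * β + b) :
    mpow M t = (a : ℂ) • M + (b : ℂ) • 1 := by
  apply mpow_affine hM
  intro i
  rcases eig_mem hM α β hq i with h | h <;> rw [h] <;> assumption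

lemma isHermitian_diag2 (x y : ℝ) :
    (Matrix.diagonal ![(x : ℂ), (y : ℂ)]).IsHermitian := by
  show _ᴴ = _
  ext i j
  fin_cases i <;> fin_cases j <;>
    simp [Matrix.conjTranspose_apply, Matrix.diagonal_apply]

lemma trPow_single (c : ℝ) (hc : c ≠ 0) (s : ℝ) (hs : 0 < s) :
    trPow !![(c : ℂ), 0; 0, 0] s = (c ^ 2) ^ (s / 2) := by
  have hX : (!![(c : ℂ), 0; 0, 0])ᴴ * !![(c : ℂ), 0; 0, 0]
      = Matrix.diagonal ![((c ^ 2 : ℝ) : ℂ), ((0 : ℝ) : ℂ)] := by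
    ext i j
    fin_cases i <;> fin_cases j <;>
      simp [Matrix.mul_apply, Fin.sum_univ_two, Matrix.conjTranspose_apply,
        Matrix.diagonal_apply] <;> push_cast <;> ring
  have hc2 : (0 : ℝ) < c ^ 2 := by positivity
  have hherm := isHermitian_diag2 (c ^ 2) 0
  have hquad : (Matrix.diagonal ![((c ^ 2 : ℝ) : ℂ), ((0 : ℝ) : ℂ)] - ((c ^ 2 : ℝ) : ℂ) • 1) *
      (Matrix.diagonal ![((c ^ 2 : ℝ) : ℂ), ((0 : ℝ) : ℂ)] - ((0 : ℝ) : ℂ) • 1) = 0 := by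
    ext i j
    fin_cases i <;> fin_cases j <;>
      simp [Matrix.mul_apply, Fin.sum_univ_two, Matrix.diagonal_apply, Matrix.one_apply]
  have h1 : ((c ^ 2) ^ (s / 2 - 1)) * (c ^ 2) = (c ^ 2) ^ (s / 2) := by
    nth_rewrite 2 [← Real.rpow_one (c ^ 2)]
    rw [← Real.rpow_add hc2]
    norm_num
  have ha : (c ^ 2) ^ (s / 2) = ((c ^ 2) ^ (s / 2 - 1)) * (c ^ 2) + 0 := by
    rw [add_zero, h1]
  have hb : (0 : ℝ) ^ (s / 2) = ((c ^ 2) ^ (s / 2 - 1)) * 0 + 0 := by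
    rw [Real.zero_rpow (by positivity : s / 2 ≠ 0)]
    ring
  rw [trPow, hX, mpow_of_quadratic hherm (c ^ 2) 0 (s / 2) ((c ^ 2) ^ (s / 2 - 1)) 0 hquad ha hb]
  simp [Matrix.trace, Matrix.diag, Matrix.diagonal_apply, Fin.sum_univ_two]
  have hre : ((c : ℂ) ^ 2).re = c ^ 2 := by
    rw [← Complex.ofReal_pow, Complex.ofReal_re]
  rw [hre, h1]

lemma trPow_zero {n : Type*} [Fintype n] [DecidableEq n] (s : ℝ) (hs : s ≠ 0) :
    trPow (0 : Matrix n n ℂ) s = 0 := by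
  have h0 : (0 : Matrix n n ℂ)ᴴ * 0 = 0 := by simp
  have hherm : (0 : Matrix n n ℂ).IsHermitian := by
    show _ᴴ = _; simp
  have hquad : ((0 : Matrix n n ℂ) - ((0 : ℝ) : ℂ) • 1) * ((0 : Matrix n n ℂ) - ((0 : ℝ) : ℂ) • 1) = 0 := by
    simp
  have ha : (0 : ℝ) ^ (s / 2) = 0 * 0 + 0 := by
    rw [Real.zero_rpow (by simpa using hs : s / 2 ≠ 0)]; ring
  rw [trPow, h0, mpow_of_quadratic hherm 0 0 (s / 2) 0 0 hquad ha ha]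
  simp

theorem not_concave_trace_functional (p : ℝ) (hp : p ≠ 0) (s : ℝ) (hs : 2 < s) :
    ∃ (m : ℕ) (K₁ K₂ A₁ A₂ : Matrix (Fin m) (Fin m) ℂ) (l : ℝ),
      A₁.PosDef ∧ A₂.PosDef ∧ l ∈ Set.Icc (0 : ℝ) 1 ∧
      trPow (K₁ * mpow ((l : ℂ) • A₁ + ((1 - l : ℝ) : ℂ) • A₂) p * K₂) s
        < l * trPow (K₁ * mpow A₁ p * K₂) s
          + (1 - l) * trPow (K₁ * mpow A₂ p * K₂) s := by
  refine ⟨2, !![1, -1; 0, 0], !![1, 0; 1, 0],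
    Matrix.diagonal ![((1 : ℝ) : ℂ), ((4 : ℝ) : ℂ)],
    Matrix.diagonal ![((4 : ℝ) : ℂ), ((1 : ℝ) : ℂ)], 1/2, ?_, ?_, ?_, ?_⟩
  · rw [Matrix.posDef_diagonal_iff]
    intro i; fin_cases i <;> simp <;> norm_num
  · rw [Matrix.posDef_diagonal_iff]
    intro i; fin_cases i <;> simp <;> norm_num
  · constructor <;> norm_num
  set q : ℝ := (4 : ℝ) ^ p with hqdef
  have hq1 : q ≠ 1 := by
    rcases lt_or_gt_of_ne hp with h | h
    · exact ne_of_lt (Real.rpow_lt_one_of_one_lt_of_neg (by norm_num) h)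
    · exact ne_of_gt (Real.one_lt_rpow_iff_of_pos (by norm_num) |>.mpr (Or.inl ⟨by norm_num, h⟩))
  set c : ℝ := 1 - q with hcdef
  have hc : c ≠ 0 := sub_ne_zero.mpr (Ne.symm hq1)
  have hc' : q - 1 ≠ 0 := sub_ne_zero.mpr hq1
  -- midpoint is (5/2) • 1
  have hmid : ((1/2 : ℝ) : ℂ) • Matrix.diagonal ![((1 : ℝ) : ℂ), ((4 : ℝ) : ℂ)]
      + ((1 - 1/2 : ℝ) : ℂ) • Matrix.diagonal ![((4 : ℝ) : ℂ), ((1 : ℝ) : ℂ)]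
      = Matrix.diagonal ![((5/2 : ℝ) : ℂ), ((5/2 : ℝ) : ℂ)] := by
    ext i j
    fin_cases i <;> fin_cases j <;>
      simp [Matrix.diagonal_apply] <;> norm_num
  -- mpow of midpoint
  have hhermM := isHermitian_diag2 (5/2) (5/2)
  have hquadM : (Matrix.diagonal ![((5/2 : ℝ) : ℂ), ((5/2 : ℝ) : ℂ)] - ((5/2 : ℝ) : ℂ) • 1) *
      (Matrix.diagonal ![((5/2 : ℝ) : ℂ), ((5/2 : ℝ) : ℂ)] - ((5/2 : ℝ) : ℂ) • 1) = 0 := by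
    have : Matrix.diagonal ![((5/2 : ℝ) : ℂ), ((5/2 : ℝ) : ℂ)] - ((5/2 : ℝ) : ℂ) • 1 = 0 := by
      ext i j
      fin_cases i <;> fin_cases j <;>
        simp [Matrix.diagonal_apply, Matrix.one_apply]
    rw [this, Matrix.zero_mul]
  have hmpowM : mpow (Matrix.diagonal ![((5/2 : ℝ) : ℂ), ((5/2 : ℝ) : ℂ)]) p
      = (0 : ℂ) • Matrix.diagonal ![((5/2 : ℝ) : ℂ), ((5/2 : ℝ) : ℂ)] + (((5/2 : ℝ) ^ p : ℝ) : ℂ) • 1 := by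
    exact mpow_of_quadratic hhermM (5/2) (5/2) p 0 ((5/2 : ℝ) ^ p) hquadM (by ring_nf) (by ring_nf)
  -- mpow of A₁ and A₂
  set a : ℝ := (q - 1) / 3 with hadef
  set b : ℝ := (4 - q) / 3 with hbdef
  have hα : (1 : ℝ) ^ p = a * 1 + b := by
    rw [Real.one_rpow]; rw [hadef, hbdef]; ring
  have hβ : (4 : ℝ) ^ p = a * 4 + b := by
    rw [← hqdef, hadef, hbdef]; ring
  have hquad1 : (Matrix.diagonal ![((1 : ℝ) : ℂ), ((4 : ℝ) : ℂ)] - ((1 : ℝ) : ℂ) • 1) *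
      (Matrix.diagonal ![((1 : ℝ) : ℂ), ((4 : ℝ) : ℂ)] - ((4 : ℝ) : ℂ) • 1) = 0 := by
    ext i j
    fin_cases i <;> fin_cases j <;>
      simp [Matrix.mul_apply, Fin.sum_univ_two, Matrix.diagonal_apply, Matrix.one_apply]
  have hquad2 : (Matrix.diagonal ![((4 : ℝ) : ℂ), ((1 : ℝ) : ℂ)] - ((1 : ℝ) : ℂ) • 1) *
      (Matrix.diagonal ![((4 : ℝ) : ℂ), ((1 : ℝ) : ℂ)] - ((4 : ℝ) : ℂ) • 1) = 0 := by
    ext i j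
    fin_cases i <;> fin_cases j <;>
      simp [Matrix.mul_apply, Fin.sum_univ_two, Matrix.diagonal_apply, Matrix.one_apply]
  have hmpow1 : mpow (Matrix.diagonal ![((1 : ℝ) : ℂ), ((4 : ℝ) : ℂ)]) p
      = (a : ℂ) • Matrix.diagonal ![((1 : ℝ) : ℂ), ((4 : ℝ) : ℂ)] + (b : ℂ) • 1 :=
    mpow_of_quadratic (isHermitian_diag2 1 4) 1 4 p a b hquad1 hα hβ
  have hmpow2 : mpow (Matrix.diagonal ![((4 : ℝ) : ℂ), ((1 : ℝ) : ℂ)]) p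
      = (a : ℂ) • Matrix.diagonal ![((4 : ℝ) : ℂ), ((1 : ℝ) : ℂ)] + (b : ℂ) • 1 :=
    mpow_of_quadratic (isHermitian_diag2 4 1) 1 4 p a b hquad2 hα hβ
  -- the three product matrices
  have hX0 : !![(1:ℂ), -1; 0, 0] * mpow (((1/2 : ℝ) : ℂ) • Matrix.diagonal ![((1 : ℝ) : ℂ), ((4 : ℝ) : ℂ)]
      + ((1 - 1/2 : ℝ) : ℂ) • Matrix.diagonal ![((4 : ℝ) : ℂ), ((1 : ℝ) : ℂ)]) p * !![(1:ℂ), 0; 1, 0]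
      = 0 := by
    rw [hmid, hmpowM]
    ext i j
    fin_cases i <;> fin_cases j <;>
      simp [Matrix.mul_apply, Fin.sum_univ_two, Matrix.diagonal_apply, Matrix.one_apply]
  have hX1 : !![(1:ℂ), -1; 0, 0] * mpow (Matrix.diagonal ![((1 : ℝ) : ℂ), ((4 : ℝ) : ℂ)]) p * !![(1:ℂ), 0; 1, 0]
      = !![(c : ℂ), 0; 0, 0] := by
    rw [hmpow1]
    ext i j
    fin_cases i <;> fin_cases j <;>
      simp [Matrix.mul_apply, Matrix.vecMul, dotProduct, Fin.sum_univ_two,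
        Matrix.diagonal_apply, Matrix.one_apply, hcdef, hadef, hbdef] <;> push_cast <;> ring
  have hX2 : !![(1:ℂ), -1; 0, 0] * mpow (Matrix.diagonal ![((4 : ℝ) : ℂ), ((1 : ℝ) : ℂ)]) p * !![(1:ℂ), 0; 1, 0]
      = !![((q - 1 : ℝ) : ℂ), 0; 0, 0] := by
    rw [hmpow2]
    ext i j
    fin_cases i <;> fin_cases j <;>
      simp [Matrix.mul_apply, Matrix.vecMul, dotProduct, Fin.sum_univ_two,
        Matrix.diagonal_apply, Matrix.one_apply, hadef, hbdef] <;> push_cast <;> ring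
  rw [hX0, hX1, hX2, trPow_zero s (by linarith), trPow_single c hc s (by linarith),
    trPow_single (q - 1) hc' s (by linarith)]
  have hceq : (q - 1) ^ 2 = c ^ 2 := by rw [hcdef]; ring
  rw [hceq]
  have hpos : (0 : ℝ) < (c ^ 2) ^ (s / 2) := Real.rpow_pos_of_pos (by positivity) _
  linarith
end

section
/- For every real p with 1/2 ≤ p < 1 and every s with 1/p ≤ s < 2, there exist a dimension n and n×n complex matrices K₁, K₂ such that the functional Ψ(A) := Tr |K₁ A^p K₂|^s is not convex on the set of positive definite n×n complex matrices; i.e., there exist positive definite A₁, A₂ and λ ∈ [0,1] with Ψ(λA₁+(1−λ)A₂) > λΨ(A₁) + (1−λ)Ψ(A₂). -/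
open Matrix
open scoped ComplexOrder

section Aux
variable {M : Matrix (Fin 2) (Fin 2) ℂ}

lemma rclike_coe (x : ℝ) : (RCLike.ofReal x : ℂ) = Complex.ofReal x := rfl

lemma trace_eq_sum_eig (hM : M.IsHermitian) :
    M.trace = ((hM.eigenvalues 0 : ℝ) : ℂ) + ((hM.eigenvalues 1 : ℝ) : ℂ) := by
  conv_lhs => rw [hM.spectral_theorem, Unitary.conjStarAlgAut_apply]
  rw [Matrix.trace_mul_cycle, (Matrix.mem_unitaryGroup_iff').mp hM.eigenvectorUnitary.2,
    one_mul, Matrix.trace_diagonal]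
  simp [Fin.sum_univ_two]

lemma eigen_pin (hM : M.IsHermitian) (a b : ℝ)
    (htr : M.trace = ((a + b : ℝ) : ℂ)) (hdet : M.det = ((a * b : ℝ) : ℂ)) :
    ∀ i, hM.eigenvalues i = a ∨ hM.eigenvalues i = b := by
  have h1 : hM.eigenvalues 0 + hM.eigenvalues 1 = a + b := by
    have := (trace_eq_sum_eig hM).symm.trans htr
    exact_mod_cast this
  have h2 : hM.eigenvalues 0 * hM.eigenvalues 1 = a * b := by
    have := (hM.det_eq_prod_eigenvalues).symm.trans hdet
    rw [Fin.prod_univ_two] at this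
    exact Complex.ofReal_inj.mp (by push_cast at this ⊢; exact this)
  have key : ∀ x y : ℝ, x + y = a + b → x * y = a * b → x = a ∨ x = b := by
    intro x y hxy hxy2
    have h : (x - a) * (x - b) = 0 := by linear_combination x * hxy - hxy2
    rcases mul_eq_zero.mp h with h | h
    · left; linarith
    · right; linarith
  intro i
  fin_cases i
  · exact key (hM.eigenvalues 0) (hM.eigenvalues 1) h1 h2
  · exact key (hM.eigenvalues 1) (hM.eigenvalues 0) (by linarith) (by rw [mul_comm]; exact h2)

lemma mpow_interp (hM : M.IsHermitian) (a b c0 c1 t : ℝ)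
    (htr : M.trace = ((a + b : ℝ) : ℂ)) (hdet : M.det = ((a * b : ℝ) : ℂ))
    (ha : c0 + c1 * a = a ^ t) (hb : c0 + c1 * b = b ^ t) :
    mpow M t = (c0 : ℂ) • 1 + (c1 : ℂ) • M := by
  have hpin := eigen_pin hM a b htr hdet
  rw [mpow, dif_pos hM]
  have hdiag : Matrix.diagonal (fun i => ((hM.eigenvalues i ^ t : ℝ) : ℂ))
      = (c0 : ℂ) • 1 + (c1 : ℂ) • Matrix.diagonal (RCLike.ofReal ∘ hM.eigenvalues) := by
    ext i j
    by_cases hij : i = j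
    · subst hij
      simp only [Matrix.diagonal_apply_eq, Matrix.add_apply, Matrix.smul_apply,
        Matrix.one_apply_eq, Function.comp_apply, smul_eq_mul, mul_one]
      rcases hpin i with h | h <;> rw [h]
      · rw [← ha]; simp only [rclike_coe]; push_cast; ring
      · rw [← hb]; simp only [rclike_coe]; push_cast; ring
    · simp [Matrix.diagonal_apply_ne _ hij, Matrix.one_apply_ne hij]
  rw [hdiag]
  rw [Matrix.mul_add, Matrix.add_mul, Matrix.mul_smul, Matrix.smul_mul, Matrix.mul_one,
    (Matrix.mem_unitaryGroup_iff).mp hM.eigenvectorUnitary.2,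
    Matrix.mul_smul, Matrix.smul_mul]
  rw [← Unitary.conjStarAlgAut_apply (S := ℂ), ← hM.spectral_theorem]

lemma trace_mpow (hM : M.IsHermitian) (t : ℝ) :
    (mpow M t).trace
      = ((hM.eigenvalues 0 ^ t : ℝ) : ℂ) + ((hM.eigenvalues 1 ^ t : ℝ) : ℂ) := by
  rw [mpow, dif_pos hM, Matrix.trace_mul_cycle,
    (Matrix.mem_unitaryGroup_iff').mp hM.eigenvectorUnitary.2, one_mul, Matrix.trace_diagonal]
  simp [Fin.sum_univ_two]

lemma trPow_rankone (X : Matrix (Fin 2) (Fin 2) ℂ) (σ s : ℝ) (hσ : 0 < σ) (hs : 0 < s)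
    (htr : (Xᴴ * X).trace = ((σ : ℝ) : ℂ)) (hdet : (Xᴴ * X).det = 0) :
    trPow X s = σ ^ (s / 2) := by
  have hH : (Xᴴ * X).IsHermitian := Matrix.isHermitian_conjTranspose_mul_self X
  have hpin := eigen_pin hH σ 0 (by rw [htr]; norm_num) (by rw [hdet]; norm_num)
  have hsum : hH.eigenvalues 0 + hH.eigenvalues 1 = σ := by
    have := (trace_eq_sum_eig hH).symm.trans htr
    exact_mod_cast this
  have h0 : (0 : ℝ) ^ (s / 2) = 0 := Real.zero_rpow (by positivity)
  rw [trPow, trace_mpow hH]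
  rcases hpin 0 with h00 | h00 <;> rcases hpin 1 with h11 | h11
  · exfalso; rw [h00, h11] at hsum; linarith
  · rw [h00, h11, h0]; simp
  · rw [h00, h11, h0]; simp
  · exfalso; rw [h00, h11] at hsum; linarith

lemma mpow_scalar (c t : ℝ) :
    mpow ((c : ℂ) • 1 : Matrix (Fin 2) (Fin 2) ℂ) t = ((c ^ t : ℝ) : ℂ) • 1 := by
  have hH : ((c : ℂ) • 1 : Matrix (Fin 2) (Fin 2) ℂ).IsHermitian := by
    simp [Matrix.IsHermitian, Matrix.conjTranspose_smul, Complex.star_def,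
      Complex.conj_ofReal]
  have hpin := eigen_pin hH c c
    (by simp [Matrix.trace_smul, Matrix.trace_one, Fintype.card_fin]; push_cast; ring)
    (by rw [Matrix.det_smul, Matrix.det_one]; push_cast [Fintype.card_fin]; ring)
  rw [mpow, dif_pos hH]
  have hdiag : Matrix.diagonal (fun i : Fin 2 => ((hH.eigenvalues i ^ t : ℝ) : ℂ))
      = ((c ^ t : ℝ) : ℂ) • 1 := by
    ext i j
    by_cases hij : i = j
    · subst hij
      rcases hpin i with h | h <;> simp [Matrix.diagonal_apply_eq, h]
    · simp [Matrix.diagonal_apply_ne _ hij, Matrix.one_apply_ne hij]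
  rw [hdiag, Matrix.mul_smul, Matrix.smul_mul, Matrix.mul_one,
    (Matrix.mem_unitaryGroup_iff).mp hH.eigenvectorUnitary.2]

lemma sandwich (B : Matrix (Fin 2) (Fin 2) ℂ) :
    !![1, 0; 0, 0] * B * !![1, 0; 0, 0] = !![B 0 0, 0; 0, 0] := by
  ext i j
  fin_cases i <;> fin_cases j <;>
    simp [Matrix.mul_apply, Matrix.vecMul, dotProduct, Fin.sum_univ_two]

lemma trPow_E (b s : ℝ) (hb : 0 < b) (hs : 0 < s) :
    trPow !![(b : ℂ), 0; 0, 0] s = (b ^ 2) ^ (s / 2) := by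
  have hXX : (!![(b : ℂ), 0; 0, 0])ᴴ * !![(b : ℂ), 0; 0, 0]
      = !![((b ^ 2 : ℝ) : ℂ), 0; 0, 0] := by
    ext i j
    fin_cases i <;> fin_cases j <;>
      simp [Matrix.mul_apply, Matrix.conjTranspose_apply, Fin.sum_univ_two,
        Complex.conj_ofReal] <;> push_cast <;> ring
  refine trPow_rankone _ (b ^ 2) s (by positivity) hs ?_ ?_
  · rw [hXX, Matrix.trace_fin_two_of]; ring
  · rw [hXX, Matrix.det_fin_two_of]; ring

end Aux

theorem not_convex_trace_functional (p : ℝ) (hp : 1 / 2 ≤ p) (hp' : p < 1)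
    (s : ℝ) (hs : 1 / p ≤ s) (hs' : s < 2) :
    ∃ (m : ℕ) (K₁ K₂ A₁ A₂ : Matrix (Fin m) (Fin m) ℂ) (l : ℝ),
      A₁.PosDef ∧ A₂.PosDef ∧ l ∈ Set.Icc (0 : ℝ) 1 ∧
      trPow (K₁ * mpow ((l : ℂ) • A₁ + ((1 - l : ℝ) : ℂ) • A₂) p * K₂) s
        > l * trPow (K₁ * mpow A₁ p * K₂) s
          + (1 - l) * trPow (K₁ * mpow A₂ p * K₂) s := by
  have hp0 : 0 < p := by linarith
  have hs0 : 0 < s := lt_of_lt_of_le (by positivity) hs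
  refine ⟨2, !![1, 0; 0, 0], !![1, 0; 0, 0],
    !![5/2, -(3/2); -(3/2), 5/2], !![5/2, 3/2; 3/2, 5/2], 1/2, ?_, ?_, by norm_num, ?_⟩
  · have hB : (!![5/2, -(3/2); -(3/2), 5/2] : Matrix (Fin 2) (Fin 2) ℂ)
        = 1 + (!![(1 + Complex.I)/2, -((1 + Complex.I)/2); 1, -1])ᴴ
            * !![(1 + Complex.I)/2, -((1 + Complex.I)/2); 1, -1] := by
      ext i j
      fin_cases i <;> fin_cases j <;>
        simp [Matrix.mul_apply, Matrix.conjTranspose_apply, Fin.sum_univ_two, Matrix.one_apply,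
          Complex.ext_iff] <;>
        norm_num [Complex.div_re, Complex.div_im, Complex.normSq, map_ofNat]
    rw [hB]
    exact Matrix.PosDef.add_posSemidef Matrix.PosDef.one
      (Matrix.posSemidef_conjTranspose_mul_self _)
  · have hB : (!![5/2, 3/2; 3/2, 5/2] : Matrix (Fin 2) (Fin 2) ℂ)
        = 1 + (!![(1 + Complex.I)/2, (1 + Complex.I)/2; 1, 1])ᴴ
            * !![(1 + Complex.I)/2, (1 + Complex.I)/2; 1, 1] := by
      ext i j
      fin_cases i <;> fin_cases j <;>
        simp [Matrix.mul_apply, Matrix.conjTranspose_apply, Fin.sum_univ_two, Matrix.one_apply,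
          Complex.ext_iff] <;>
        norm_num [Complex.div_re, Complex.div_im, Complex.normSq, map_ofNat]
    rw [hB]
    exact Matrix.PosDef.add_posSemidef Matrix.PosDef.one
      (Matrix.posSemidef_conjTranspose_mul_self _)
  · -- the inequality
    have h4p : (0:ℝ) < (4:ℝ) ^ p := Real.rpow_pos_of_pos (by norm_num) p
    have hβ0 : (0:ℝ) < (1 + (4:ℝ) ^ p) / 2 := by positivity
    have hγ0 : (0:ℝ) < (5/2 : ℝ) ^ p := Real.rpow_pos_of_pos (by norm_num) p
    -- mpow A₁ p and mpow A₂ p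
    have hherm1 : (!![5/2, -(3/2); -(3/2), 5/2] : Matrix (Fin 2) (Fin 2) ℂ).IsHermitian := by
      ext i j
      fin_cases i <;> fin_cases j <;> simp [Matrix.conjTranspose_apply, Complex.ext_iff]
    have hherm2 : (!![5/2, 3/2; 3/2, 5/2] : Matrix (Fin 2) (Fin 2) ℂ).IsHermitian := by
      ext i j
      fin_cases i <;> fin_cases j <;> simp [Matrix.conjTranspose_apply, Complex.ext_iff]
    have hinterp1 : mpow (!![5/2, -(3/2); -(3/2), 5/2] : Matrix (Fin 2) (Fin 2) ℂ) p
        = (((4 - (4:ℝ)^p)/3 : ℝ) : ℂ) • 1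
          + ((((4:ℝ)^p - 1)/3 : ℝ) : ℂ) • !![5/2, -(3/2); -(3/2), 5/2] := by
      refine mpow_interp hherm1 1 4 _ _ p ?_ ?_ ?_ ?_
      · rw [Matrix.trace_fin_two_of]; norm_num
      · rw [Matrix.det_fin_two_of]; norm_num
      · rw [Real.one_rpow]; ring
      · ring
    have hinterp2 : mpow (!![5/2, 3/2; 3/2, 5/2] : Matrix (Fin 2) (Fin 2) ℂ) p
        = (((4 - (4:ℝ)^p)/3 : ℝ) : ℂ) • 1
          + ((((4:ℝ)^p - 1)/3 : ℝ) : ℂ) • !![5/2, 3/2; 3/2, 5/2] := by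
      refine mpow_interp hherm2 1 4 _ _ p ?_ ?_ ?_ ?_
      · rw [Matrix.trace_fin_two_of]; norm_num
      · rw [Matrix.det_fin_two_of]; norm_num
      · rw [Real.one_rpow]; ring
      · ring
    -- the midpoint matrix is scalar
    have hmid : ((1/2 : ℝ) : ℂ) • (!![5/2, -(3/2); -(3/2), 5/2] : Matrix (Fin 2) (Fin 2) ℂ)
        + ((1 - 1/2 : ℝ) : ℂ) • (!![5/2, 3/2; 3/2, 5/2] : Matrix (Fin 2) (Fin 2) ℂ)
        = ((5/2 : ℝ) : ℂ) • 1 := by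
      ext i j
      fin_cases i <;> fin_cases j <;>
        simp [Matrix.one_apply] <;> norm_num
    -- value at the midpoint
    have hvalmid : trPow (!![1, 0; 0, 0] * mpow (((1/2 : ℝ) : ℂ) • !![5/2, -(3/2); -(3/2), 5/2]
          + ((1 - 1/2 : ℝ) : ℂ) • !![5/2, 3/2; 3/2, 5/2]) p * !![1, 0; 0, 0]) s
        = (((5/2:ℝ)^p) ^ 2) ^ (s/2) := by
      rw [hmid, mpow_scalar]
      have h1 : !![(1:ℂ), 0; 0, 0] * (((((5/2:ℝ)) ^ p : ℝ) : ℂ) • 1) * !![1, 0; 0, 0]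
          = !![((((5/2:ℝ)) ^ p : ℝ) : ℂ), 0; 0, 0] := by
        rw [sandwich]
        congr 1
        simp [Matrix.smul_apply, Matrix.one_apply]
      rw [h1, trPow_E _ s hγ0 hs0]
    have hβval : ((4 - (4:ℝ)^p)/3 : ℝ) + (((4:ℝ)^p - 1)/3 : ℝ) * (5/2)
        = (1 + (4:ℝ)^p)/2 := by ring
    have hval1 : trPow (!![1, 0; 0, 0]
          * mpow (!![5/2, -(3/2); -(3/2), 5/2] : Matrix (Fin 2) (Fin 2) ℂ) p * !![1, 0; 0, 0]) s
        = (((1 + (4:ℝ)^p)/2) ^ 2) ^ (s/2) := by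
      rw [hinterp1, sandwich]
      have h1 : ((((4 - (4:ℝ)^p)/3 : ℝ) : ℂ) • (1 : Matrix (Fin 2) (Fin 2) ℂ)
          + ((((4:ℝ)^p - 1)/3 : ℝ) : ℂ)
            • (!![5/2, -(3/2); -(3/2), 5/2] : Matrix (Fin 2) (Fin 2) ℂ)) 0 0
          = (((1 + (4:ℝ)^p)/2 : ℝ) : ℂ) := by
        simp [Matrix.add_apply, Matrix.smul_apply, Matrix.one_apply]
        push_cast
        ring
      rw [h1, trPow_E _ s hβ0 hs0]
    have hval2 : trPow (!![1, 0; 0, 0]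
          * mpow (!![5/2, 3/2; 3/2, 5/2] : Matrix (Fin 2) (Fin 2) ℂ) p * !![1, 0; 0, 0]) s
        = (((1 + (4:ℝ)^p)/2) ^ 2) ^ (s/2) := by
      rw [hinterp2, sandwich]
      have h1 : ((((4 - (4:ℝ)^p)/3 : ℝ) : ℂ) • (1 : Matrix (Fin 2) (Fin 2) ℂ)
          + ((((4:ℝ)^p - 1)/3 : ℝ) : ℂ)
            • (!![5/2, 3/2; 3/2, 5/2] : Matrix (Fin 2) (Fin 2) ℂ)) 0 0
          = (((1 + (4:ℝ)^p)/2 : ℝ) : ℂ) := by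
        simp [Matrix.add_apply, Matrix.smul_apply, Matrix.one_apply]
        push_cast
        ring
      rw [h1, trPow_E _ s hβ0 hs0]
    rw [hvalmid, hval1, hval2]
    -- the key strict concavity inequality
    have hkey : (1 + (4:ℝ)^p)/2 < (5/2 : ℝ)^p := by
      have key := (Real.strictConcaveOn_rpow hp0 hp').2
        (Set.mem_Ici.mpr (by norm_num : (0:ℝ) ≤ 1))
        (Set.mem_Ici.mpr (by norm_num : (0:ℝ) ≤ 4))
        (by norm_num) (by norm_num : (0:ℝ) < 1/2) (by norm_num : (0:ℝ) < 1/2) (by norm_num)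
      simp only [smul_eq_mul] at key
      rw [Real.one_rpow] at key
      norm_num at key
      linarith
    have hsq : (((1 + (4:ℝ)^p)/2) ^ 2) < (((5/2:ℝ)^p) ^ 2) := by nlinarith
    have := Real.rpow_lt_rpow (by positivity) hsq (by positivity : (0:ℝ) < s/2)
    linarith
end

section
/- The function h : (0,∞) → (0,∞) defined by h(x) := (x−1)/log x for x ≠ 1 and h(1) := 1 is operator monotone: for all n and all positive definite n×n complex matrices A, B with A ≤ B in the Loewner order, one has h(A) ≤ h(B), where h is applied via the spectral decomposition. (This follows from the representation h(x) = ∫₀¹ x^t dt.) -/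
open Matrix
open scoped ComplexOrder

/-- Applying a real function to a Hermitian matrix via the spectral decomposition
(and `0` for non-Hermitian matrices). -/
noncomputable def applyFun {n : Type*} [Fintype n] [DecidableEq n]
    (f : ℝ → ℝ) (M : Matrix n n ℂ) : Matrix n n ℂ :=
  if h : M.IsHermitian then
    (h.eigenvectorUnitary : Matrix n n ℂ) *
      Matrix.diagonal (fun i => ((f (h.eigenvalues i) : ℝ) : ℂ)) *
      (star (h.eigenvectorUnitary : Matrix n n ℂ))
  else 0

/-- `h(x) = (x - 1)/log x` for `x ≠ 1`, `h(1) = 1`. -/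
noncomputable def hfun (x : ℝ) : ℝ :=
  if x = 1 then 1 else (x - 1) / Real.log x

section Aux
variable {n : Type*} [Fintype n] [DecidableEq n] {M : Matrix n n ℂ}

lemma applyFun_eq (hM : M.IsHermitian) (f : ℝ → ℝ) :
    applyFun f M = (hM.eigenvectorUnitary : Matrix n n ℂ) *
      Matrix.diagonal (fun i => ((f (hM.eigenvalues i) : ℝ) : ℂ)) *
      (star (hM.eigenvectorUnitary : Matrix n n ℂ)) := dif_pos hM

lemma star_mul_self_eigen (hM : M.IsHermitian) :
    (star (hM.eigenvectorUnitary : Matrix n n ℂ)) * (hM.eigenvectorUnitary : Matrix n n ℂ) = 1 :=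
  Unitary.coe_star_mul_self hM.eigenvectorUnitary

lemma self_mul_star_eigen (hM : M.IsHermitian) :
    (hM.eigenvectorUnitary : Matrix n n ℂ) * (star (hM.eigenvectorUnitary : Matrix n n ℂ)) = 1 :=
  Unitary.coe_mul_star_self hM.eigenvectorUnitary

lemma applyFun_congr (hM : M.IsHermitian) {f g : ℝ → ℝ}
    (h : ∀ i, f (hM.eigenvalues i) = g (hM.eigenvalues i)) :
    applyFun f M = applyFun g M := by
  rw [applyFun_eq hM f, applyFun_eq hM g]
  have : (fun i => ((f (hM.eigenvalues i) : ℝ) : ℂ)) = fun i => ((g (hM.eigenvalues i) : ℝ) : ℂ) :=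
    funext fun i => by rw [h i]
  rw [this]

lemma applyFun_id (hM : M.IsHermitian) : applyFun (fun x => x) M = M := by
  rw [applyFun_eq hM]
  exact hM.spectral_theorem.symm

lemma applyFun_one (hM : M.IsHermitian) : applyFun (fun _ => 1) M = 1 := by
  rw [applyFun_eq hM]
  simp [Matrix.diagonal_one, self_mul_star_eigen hM]

lemma applyFun_isHermitian (hM : M.IsHermitian) (f : ℝ → ℝ) :
    (applyFun f M).IsHermitian := by
  rw [applyFun_eq hM f, Matrix.star_eq_conjTranspose]
  exact Matrix.isHermitian_mul_mul_conjTranspose _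
    (Matrix.isHermitian_diagonal_of_self_adjoint _ (by ext i; simp))

lemma applyFun_mul (hM : M.IsHermitian) (f g : ℝ → ℝ) :
    applyFun f M * applyFun g M = applyFun (fun x => f x * g x) M := by
  rw [applyFun_eq hM f, applyFun_eq hM g, applyFun_eq hM (fun x => f x * g x)]
  set U := (hM.eigenvectorUnitary : Matrix n n ℂ)
  have key : ∀ X : Matrix n n ℂ, star U * (U * X) = X := by
    intro X; rw [← mul_assoc, star_mul_self_eigen hM, one_mul]
  have hd : (Matrix.diagonal fun i => ((f (hM.eigenvalues i) : ℝ) : ℂ)) *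
      (Matrix.diagonal fun i => ((g (hM.eigenvalues i) : ℝ) : ℂ)) =
      Matrix.diagonal fun i => ((f (hM.eigenvalues i) * g (hM.eigenvalues i) : ℝ) : ℂ) := by
    rw [Matrix.diagonal_mul_diagonal]
    congr 1
    funext i
    push_cast
    ring
  simp only [mul_assoc]
  rw [key, ← hd]
  simp only [mul_assoc]

lemma applyFun_sub (hM : M.IsHermitian) (f g : ℝ → ℝ) :
    applyFun f M - applyFun g M = applyFun (fun x => f x - g x) M := by
  rw [applyFun_eq hM f, applyFun_eq hM g, applyFun_eq hM (fun x => f x - g x)]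
  rw [← Matrix.sub_mul, ← Matrix.mul_sub]
  have hd : (Matrix.diagonal fun i => ((f (hM.eigenvalues i) : ℝ) : ℂ)) -
      (Matrix.diagonal fun i => ((g (hM.eigenvalues i) : ℝ) : ℂ)) =
      Matrix.diagonal fun i => ((f (hM.eigenvalues i) - g (hM.eigenvalues i) : ℝ) : ℂ) := by
    rw [Matrix.diagonal_sub]
    congr 1
    funext i
    push_cast
    ring
  rw [hd]

lemma applyFun_inv (hM : M.IsHermitian) (f : ℝ → ℝ)
    (hf : ∀ i, f (hM.eigenvalues i) ≠ 0) :
    (applyFun f M)⁻¹ = applyFun (fun x => (f x)⁻¹) M := by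
  apply Matrix.inv_eq_right_inv
  rw [applyFun_mul hM]
  rw [applyFun_congr hM (g := fun _ => 1) (fun i => mul_inv_cancel₀ (hf i))]
  exact applyFun_one hM


section Aux2
variable {n : Type*} [Fintype n] [DecidableEq n] {M : Matrix n n ℂ}

lemma applyFun_dotProduct (hM : M.IsHermitian) (f : ℝ → ℝ) (x : n → ℂ) :
    star x ⬝ᵥ (applyFun f M) *ᵥ x =
      ((∑ i, f (hM.eigenvalues i) *
        ‖(star (hM.eigenvectorUnitary : Matrix n n ℂ) *ᵥ x) i‖ ^ 2 : ℝ) : ℂ) := by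
  rw [applyFun_eq hM f]
  set U := (hM.eigenvectorUnitary : Matrix n n ℂ) with hU
  set y := star U *ᵥ x with hy
  have h1 : (U * Matrix.diagonal (fun i => ((f (hM.eigenvalues i) : ℝ) : ℂ)) * star U) *ᵥ x
      = U *ᵥ (Matrix.diagonal (fun i => ((f (hM.eigenvalues i) : ℝ) : ℂ)) *ᵥ y) := by
    rw [hy, Matrix.mulVec_mulVec, Matrix.mulVec_mulVec, mul_assoc]
  have h2 : star x ᵥ* U = star y := by
    rw [hy, Matrix.star_mulVec, Matrix.star_eq_conjTranspose, Matrix.conjTranspose_conjTranspose]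
  rw [h1, Matrix.dotProduct_mulVec, h2]
  simp only [dotProduct, Matrix.mulVec_diagonal, Pi.star_apply]
  push_cast
  congr 1
  funext i
  rw [show star (y i) * (((f (hM.eigenvalues i) : ℝ) : ℂ) * y i)
      = ((f (hM.eigenvalues i) : ℝ) : ℂ) * ((starRingEnd ℂ) (y i) * y i) from by
    simp [RCLike.star_def]; ring]
  rw [Complex.conj_mul']

lemma applyFun_posSemidef (hM : M.IsHermitian) {f : ℝ → ℝ}
    (hf : ∀ i, 0 ≤ f (hM.eigenvalues i)) : (applyFun f M).PosSemidef := by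
  refine posSemidef_iff_dotProduct_mulVec.mpr ⟨applyFun_isHermitian hM f, fun x => ?_⟩
  rw [applyFun_dotProduct hM f x]
  rw [Complex.zero_le_real]
  exact Finset.sum_nonneg fun i _ => mul_nonneg (hf i) (sq_nonneg _)

lemma applyFun_posDef (hM : M.IsHermitian) {f : ℝ → ℝ}
    (hf : ∀ i, 0 < f (hM.eigenvalues i)) : (applyFun f M).PosDef := by
  refine posDef_iff_dotProduct_mulVec.mpr ⟨applyFun_isHermitian hM f, fun x hx => ?_⟩
  rw [applyFun_dotProduct hM f x]
  rw [Complex.zero_lt_real]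
  have hy : star (hM.eigenvectorUnitary : Matrix n n ℂ) *ᵥ x ≠ 0 := by
    intro h
    apply hx
    have := congrArg (fun v => (hM.eigenvectorUnitary : Matrix n n ℂ) *ᵥ v) h
    simpa [Matrix.mulVec_mulVec, self_mul_star_eigen hM] using this
  obtain ⟨i, hi⟩ : ∃ i, (star (hM.eigenvectorUnitary : Matrix n n ℂ) *ᵥ x) i ≠ 0 := by
    by_contra h
    push_neg at h
    exact hy (funext h)
  refine Finset.sum_pos' (fun j _ => mul_nonneg (hf j).le (sq_nonneg _)) ⟨i, Finset.mem_univ i, ?_⟩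
  exact mul_pos (hf i) (pow_pos (norm_pos_iff.mpr hi) 2)

lemma applyFun_affine (hM : M.IsHermitian) (a b : ℝ) :
    applyFun (fun x => a + b * x) M = (a : ℂ) • 1 + (b : ℂ) • M := by
  rw [applyFun_eq hM]
  set U := (hM.eigenvectorUnitary : Matrix n n ℂ)
  have hd : (Matrix.diagonal fun i => ((a + b * hM.eigenvalues i : ℝ) : ℂ))
      = (a : ℂ) • 1 + (b : ℂ) • Matrix.diagonal (RCLike.ofReal ∘ hM.eigenvalues) := by
    ext i j
    by_cases h : i = j
    · subst h; simp [Matrix.diagonal_apply_eq, Matrix.one_apply_eq]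
    · simp [Matrix.diagonal_apply_ne _ h, Matrix.one_apply_ne h]
  rw [hd, Matrix.mul_add, Matrix.add_mul, Matrix.mul_smul, Matrix.smul_mul, Matrix.mul_one,
    self_mul_star_eigen hM, Matrix.mul_smul, Matrix.smul_mul]
  conv_rhs => rw [hM.spectral_theorem]
  rfl

lemma eigenvalues_one_le (hM : M.IsHermitian) (h : (M - 1).PosSemidef) (i : n) :
    1 ≤ hM.eigenvalues i := by
  have h0 := h.re_dotProduct_nonneg ⇑(hM.eigenvectorBasis i)
  rw [Matrix.sub_mulVec, dotProduct_sub, map_sub, Matrix.one_mulVec] at h0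
  have hvv : star ⇑(hM.eigenvectorBasis i) ⬝ᵥ ⇑(hM.eigenvectorBasis i) = 1 := by
    rw [dotProduct_comm, ← EuclideanSpace.inner_eq_star_dotProduct, inner_self_eq_norm_sq_to_K]
    simp [hM.eigenvectorBasis.orthonormal.1 i]
  rw [hvv] at h0
  rw [← hM.eigenvalues_eq i] at h0
  simpa using h0

end Aux2
lemma inv_antitone {X Y : Matrix n n ℂ} (hX : X.PosDef) (hY : Y.PosDef)
    (h : (Y - X).PosSemidef) : (X⁻¹ - Y⁻¹).PosSemidef := by
  set C := applyFun Real.sqrt X with hC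
  have hCpd : C.PosDef :=
    applyFun_posDef hX.isHermitian fun i => Real.sqrt_pos.mpr (hX.eigenvalues_pos i)
  have hCh : C.IsHermitian := hCpd.isHermitian
  have hCdet : C.det ≠ 0 := hCpd.det_pos.ne'
  have hCC : C * C = X := by
    rw [hC, applyFun_mul hX.isHermitian,
      applyFun_congr hX.isHermitian (g := fun x => x)
        (fun i => Real.mul_self_sqrt (hX.eigenvalues_pos i).le),
      applyFun_id hX.isHermitian]
  have hCinv : C⁻¹ * C = 1 := Matrix.nonsing_inv_mul C hCdet.isUnit
  have hCinv' : C * C⁻¹ = 1 := Matrix.mul_nonsing_inv C hCdet.isUnit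
  have hCih : (C⁻¹).IsHermitian := hCh.inv
  set E := C⁻¹ * Y * C⁻¹ with hE
  have hE1 : E - 1 = C⁻¹ * (Y - X) * C⁻¹ := by
    rw [Matrix.mul_sub, Matrix.sub_mul]
    congr 1
    rw [← hCC, ← mul_assoc, hCinv, one_mul, hCinv']
  have hE1psd : (E - 1).PosSemidef := by
    have := h.mul_mul_conjTranspose_same C⁻¹
    rw [hCih] at this
    rwa [hE1]
  have hEpd : E.PosDef := by
    have h2 := Matrix.PosDef.add_posSemidef Matrix.PosDef.one hE1psd
    have h3 : (1 : Matrix n n ℂ) + (E - 1) = E := by abel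
    rwa [h3] at h2
  have hEh : E.IsHermitian := hEpd.isHermitian
  have hev1 : ∀ i, 1 ≤ hEh.eigenvalues i := eigenvalues_one_le hEh hE1psd
  have hevpos : ∀ i, (0:ℝ) < hEh.eigenvalues i := fun i => lt_of_lt_of_le one_pos (hev1 i)
  have hEinv : E⁻¹ = applyFun (fun x => x⁻¹) E := by
    calc E⁻¹ = (applyFun (fun x => x) E)⁻¹ := by rw [applyFun_id hEh]
      _ = applyFun (fun x => x⁻¹) E := applyFun_inv hEh _ fun i => (hevpos i).ne'
  have h1Einv : ((1 : Matrix n n ℂ) - E⁻¹).PosSemidef := by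
    rw [hEinv, show (1 : Matrix n n ℂ) = applyFun (fun _ => 1) E from (applyFun_one hEh).symm,
      applyFun_sub hEh]
    refine applyFun_posSemidef hEh fun i => ?_
    have h1 := hev1 i
    have h2 := hevpos i
    have : (hEh.eigenvalues i)⁻¹ ≤ 1 := by
      rw [inv_le_one_iff₀]; right; exact h1
    linarith
  have hEiCYC : E⁻¹ = C * Y⁻¹ * C := by
    rw [hE, Matrix.mul_inv_rev, Matrix.mul_inv_rev, Matrix.nonsing_inv_nonsing_inv C hCdet.isUnit,
      ← mul_assoc]
  have hfinal : X⁻¹ - Y⁻¹ = C⁻¹ * ((1 : Matrix n n ℂ) - E⁻¹) * C⁻¹ := by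
    rw [hEiCYC, Matrix.mul_sub, Matrix.sub_mul, Matrix.mul_one]
    congr 1
    · rw [← hCC, Matrix.mul_inv_rev]
    · symm
      calc C⁻¹ * (C * Y⁻¹ * C) * C⁻¹ = (C⁻¹ * C) * Y⁻¹ * (C * C⁻¹) := by
            simp only [mul_assoc]
        _ = Y⁻¹ := by rw [hCinv, hCinv', one_mul, mul_one]
  rw [hfinal]
  have := h1Einv.mul_mul_conjTranspose_same C⁻¹
  rwa [hCih] at this

lemma hfun_pos {l : ℝ} (hl : 0 < l) : 0 < hfun l := by
  unfold hfun
  rcases eq_or_ne l 1 with h | h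
  · simp [h]
  · rw [if_neg h]
    rcases lt_or_gt_of_ne h with hlt | hgt
    · exact div_pos_of_neg_of_neg (by linarith) (Real.log_neg hl hlt)
    · exact div_pos (by linarith) (Real.log_pos hgt)

lemma affine_pos {l : ℝ} (hl : 0 < l) {s : ℝ} (hs : s ∈ Set.uIcc (0:ℝ) 1) :
    0 < s + (1 - s) * l := by
  rw [Set.uIcc_of_le (by norm_num : (0:ℝ) ≤ 1)] at hs
  obtain ⟨h0, h1⟩ := hs
  rcases h0.lt_or_eq with hs0 | hs0
  · have : 0 ≤ (1 - s) * l := mul_nonneg (by linarith) hl.le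
    linarith
  · rw [← hs0]
    simpa using hl

lemma integral_inv_affine {l : ℝ} (hl : 0 < l) :
    ∫ s in (0:ℝ)..1, (s + (1 - s) * l)⁻¹ = (hfun l)⁻¹ := by
  rcases eq_or_ne l 1 with h | h
  · subst h
    simp only [mul_one, add_sub_cancel, inv_one]
    simp [hfun]
  · have hne : 1 - l ≠ 0 := sub_ne_zero.mpr (Ne.symm h)
    have hderiv : ∀ s ∈ Set.uIcc (0:ℝ) 1,
        HasDerivAt (fun s => Real.log (s + (1 - s) * l) / (1 - l)) ((s + (1 - s) * l)⁻¹) s := by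
      intro s hs
      have h1 : HasDerivAt (fun s : ℝ => s + (1 - s) * l) (1 - l) s := by
        have := (hasDerivAt_id s).add (((hasDerivAt_id s).const_sub 1).mul_const l)
        exact this.congr_deriv (by ring)
      have h2 := (h1.log (affine_pos hl hs).ne').div_const (1 - l)
      refine h2.congr_deriv ?_
      rw [div_right_comm, div_self hne, one_div]
    have hcont : IntervalIntegrable (fun s : ℝ => (s + (1 - s) * l)⁻¹)
        MeasureTheory.volume 0 1 := by
      apply ContinuousOn.intervalIntegrable
      apply ContinuousOn.inv₀
      · fun_prop
      · exact fun s hs => (affine_pos hl hs).ne'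
    rw [intervalIntegral.integral_eq_sub_of_hasDerivAt hderiv hcont]
    rw [hfun, if_neg h, inv_div]
    norm_num
    rw [← div_neg, neg_sub]

lemma integrable_sum_affine {k : Type*} [Fintype k] {lam : k → ℝ} (hlam : ∀ i, 0 < lam i)
    (c : k → ℝ) :
    IntervalIntegrable (fun s => ∑ i, (s + (1 - s) * lam i)⁻¹ * c i)
      MeasureTheory.volume 0 1 := by
  apply ContinuousOn.intervalIntegrable
  apply continuousOn_finset_sum
  intro i _
  apply ContinuousOn.mul _ continuousOn_const
  apply ContinuousOn.inv₀
  · fun_prop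
  · exact fun s hs => (affine_pos (hlam i) hs).ne'

lemma sum_hfun_inv_eq_integral {k : Type*} [Fintype k] {lam : k → ℝ} (hlam : ∀ i, 0 < lam i)
    (c : k → ℝ) :
    ∑ i, (hfun (lam i))⁻¹ * c i
      = ∫ s in (0:ℝ)..1, ∑ i, (s + (1 - s) * lam i)⁻¹ * c i := by
  rw [intervalIntegral.integral_finset_sum]
  · refine Finset.sum_congr rfl fun i _ => ?_
    rw [intervalIntegral.integral_mul_const, integral_inv_affine (hlam i)]
  · intro i _
    apply ContinuousOn.intervalIntegrable
    apply ContinuousOn.mul _ continuousOn_const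
    apply ContinuousOn.inv₀
    · fun_prop
    · exact fun s hs => (affine_pos (hlam i) hs).ne'
end Aux

theorem hfun_operator_monotone
    (m : ℕ) (A B : Matrix (Fin m) (Fin m) ℂ) (hA : A.PosDef) (hB : B.PosDef)
    (hAB : (B - A).PosSemidef) :
    (applyFun hfun B - applyFun hfun A).PosSemidef := by
  classical
  have hAh := hA.isHermitian
  have hBh := hB.isHermitian
  set g : ℝ → ℝ := fun x => (hfun x)⁻¹ with hg
  have hgposA : ∀ i, 0 < g (hAh.eigenvalues i) :=
    fun i => inv_pos.mpr (hfun_pos (hA.eigenvalues_pos i))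
  have hgposB : ∀ i, 0 < g (hBh.eigenvalues i) :=
    fun i => inv_pos.mpr (hfun_pos (hB.eigenvalues_pos i))
  have hGA : (applyFun g A).PosDef := applyFun_posDef hAh hgposA
  have hGB : (applyFun g B).PosDef := applyFun_posDef hBh hgposB
  -- the key monotonicity: applyFun g A - applyFun g B is PSD
  have key : (applyFun g A - applyFun g B).PosSemidef := by
    refine posSemidef_iff_dotProduct_mulVec.mpr ⟨(applyFun_isHermitian hAh g).sub (applyFun_isHermitian hBh g), fun x => ?_⟩
    rw [Matrix.sub_mulVec, dotProduct_sub, applyFun_dotProduct hAh g x,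
      applyFun_dotProduct hBh g x, ← Complex.ofReal_sub, Complex.zero_le_real, sub_nonneg]
    set cA : Fin m → ℝ :=
      fun i => ‖(star (hAh.eigenvectorUnitary : Matrix (Fin m) (Fin m) ℂ) *ᵥ x) i‖ ^ 2 with hcA
    set cB : Fin m → ℝ :=
      fun i => ‖(star (hBh.eigenvectorUnitary : Matrix (Fin m) (Fin m) ℂ) *ᵥ x) i‖ ^ 2 with hcB
    calc ∑ i, g (hBh.eigenvalues i) * cB i
        = ∫ s in (0:ℝ)..1, ∑ i, (s + (1 - s) * hBh.eigenvalues i)⁻¹ * cB i :=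
          sum_hfun_inv_eq_integral (fun i => hB.eigenvalues_pos i) cB
      _ ≤ ∫ s in (0:ℝ)..1, ∑ i, (s + (1 - s) * hAh.eigenvalues i)⁻¹ * cA i := by
          apply intervalIntegral.integral_mono_on (by norm_num : (0:ℝ) ≤ 1)
            (integrable_sum_affine (fun i => hB.eigenvalues_pos i) cB)
            (integrable_sum_affine (fun i => hA.eigenvalues_pos i) cA)
          intro s hs
          have hs' : s ∈ Set.uIcc (0:ℝ) 1 := by
            rwa [Set.uIcc_of_le (by norm_num : (0:ℝ) ≤ 1)]
          have hXA : (applyFun (fun t => s + (1 - s) * t) A).PosDef :=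
            applyFun_posDef hAh fun i => affine_pos (hA.eigenvalues_pos i) hs'
          have hXB : (applyFun (fun t => s + (1 - s) * t) B).PosDef :=
            applyFun_posDef hBh fun i => affine_pos (hB.eigenvalues_pos i) hs'
          have hYX : (applyFun (fun t => s + (1 - s) * t) B
              - applyFun (fun t => s + (1 - s) * t) A).PosSemidef := by
            rw [applyFun_affine hAh, applyFun_affine hBh]
            have heq : ((s:ℂ) • (1 : Matrix (Fin m) (Fin m) ℂ) + ((1 - s : ℝ):ℂ) • B)
                - ((s:ℂ) • 1 + ((1 - s : ℝ):ℂ) • A) = ((1 - s : ℝ):ℂ) • (B - A) := by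
              rw [smul_sub]
              abel
            rw [heq]
            refine posSemidef_iff_dotProduct_mulVec.mpr ⟨?_, fun y => ?_⟩
            · show (((1 - s : ℝ):ℂ) • (B - A))ᴴ = ((1 - s : ℝ):ℂ) • (B - A)
              rw [Matrix.conjTranspose_smul, hAB.isHermitian]
              congr 1
              simp [RCLike.star_def]
            · rw [Matrix.smul_mulVec, dotProduct_smul, smul_eq_mul]
              refine mul_nonneg ?_ ((posSemidef_iff_dotProduct_mulVec.mp hAB).2 y)
              rw [Complex.zero_le_real]
              have := hs.1
              have := hs.2
              linarith
          have hmono := inv_antitone hXA hXB hYX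
          rw [applyFun_inv hAh _ (fun i => (affine_pos (hA.eigenvalues_pos i) hs').ne'),
            applyFun_inv hBh _ (fun i => (affine_pos (hB.eigenvalues_pos i) hs').ne')] at hmono
          have hq := (posSemidef_iff_dotProduct_mulVec.mp hmono).2 x
          rw [Matrix.sub_mulVec, dotProduct_sub, applyFun_dotProduct hAh _ x,
            applyFun_dotProduct hBh _ x, ← Complex.ofReal_sub, Complex.zero_le_real,
            sub_nonneg] at hq
          exact hq
      _ = ∑ i, g (hAh.eigenvalues i) * cA i :=
          (sum_hfun_inv_eq_integral (fun i => hA.eigenvalues_pos i) cA).symm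
  have hinvA : (applyFun g A)⁻¹ = applyFun hfun A := by
    rw [applyFun_inv hAh g (fun i => (hgposA i).ne')]
    exact applyFun_congr hAh fun i => inv_inv _
  have hinvB : (applyFun g B)⁻¹ = applyFun hfun B := by
    rw [applyFun_inv hBh g (fun i => (hgposB i).ne')]
    exact applyFun_congr hBh fun i => inv_inv _
  have := inv_antitone hGB hGA key
  rwa [hinvA, hinvB] at this
end

section
/- Let 1 < p < ∞, n ≥ 1, let d ∈ (0,∞)^n and a, b ∈ ℝ^n, and let ‖x‖_p := (Σ_j |x_j|^p)^{1/p}. Then the function (s,t) ↦ ‖d + sa + tb‖_p² is twice continuously differentiable near (0,0) and ∂_s∂_t|_{s=t=0} ‖d + sa + tb‖_p² = 2(2−p) ‖d‖_p^{2−2p} (Σ_j d_j^{p−1} a_j)(Σ_j d_j^{p−1} b_j) + 2(p−1) ‖d‖_p^{2−p} Σ_j d_j^{p−2} a_j b_j. -/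
lemma aux_term (q : ℝ) (c e : ℝ) (hc : c ≠ 0) :
    HasDerivAt (fun s : ℝ => (c + s * e) ^ q) (q * c ^ (q - 1) * e) 0 := by
  have h1 : HasDerivAt (fun s : ℝ => c + s * e) e 0 := by
    simpa using ((hasDerivAt_id (0:ℝ)).mul_const e).const_add c
  have h2 : HasDerivAt (fun x : ℝ => x ^ q) (q * c ^ (q - 1))
      ((fun s : ℝ => c + s * e) 0) := by
    simpa using Real.hasDerivAt_rpow_const (p := q) (x := c) (Or.inl hc)
  exact h2.comp 0 h1

lemma aux_inner (p : ℝ) (hp : 0 < p) {n : ℕ} (hn : 1 ≤ n)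
    (c b : Fin n → ℝ) (hc : ∀ j, 0 < c j) :
    HasDerivAt (fun t : ℝ => ((∑ j, (c j + t * b j) ^ p) ^ (1 / p)) ^ (2 : ℕ))
      (2 * (∑ j, c j ^ p) ^ (2 / p - 1) * ∑ j, c j ^ (p - 1) * b j) 0 := by
  have hne : (Finset.univ : Finset (Fin n)).Nonempty := ⟨⟨0, hn⟩, Finset.mem_univ _⟩
  have hS0 : 0 < ∑ j, c j ^ p :=
    Finset.sum_pos (fun j _ => Real.rpow_pos_of_pos (hc j) p) hne
  have hS : HasDerivAt (fun t : ℝ => ∑ j, (c j + t * b j) ^ p)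
      (∑ j, p * c j ^ (p - 1) * b j) 0 :=
    HasDerivAt.fun_sum fun j _ => aux_term p (c j) (b j) (hc j).ne'
  have hφ1 : HasDerivAt (fun x : ℝ => x ^ (1 / p))
      ((1 / p) * (∑ j, c j ^ p) ^ (1 / p - 1))
      ((fun t : ℝ => ∑ j, (c j + t * b j) ^ p) 0) := by
    simpa using Real.hasDerivAt_rpow_const (p := 1 / p) (x := ∑ j, c j ^ p)
      (Or.inl hS0.ne')
  have hφ := hφ1.pow 2
  have : HasDerivAt (fun t : ℝ => ((∑ j, (c j + t * b j) ^ p) ^ (1 / p)) ^ (2 : ℕ))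
      ((((2 : ℕ) : ℝ) * (((fun t : ℝ => ∑ j, (c j + t * b j) ^ p) 0) ^ (1 / p)) ^ (2 - 1) *
        (1 / p * (∑ j, c j ^ p) ^ (1 / p - 1))) * ∑ j, p * c j ^ (p - 1) * b j) 0 := by
    have h := hφ.comp 0 hS; exact h
  convert this using 1
  simp only [Nat.reduceSub, pow_one, Nat.cast_ofNat]
  have hsum : (∑ j, p * c j ^ (p - 1) * b j) = p * ∑ j, c j ^ (p - 1) * b j := by
    rw [Finset.mul_sum]; exact Finset.sum_congr rfl (by intros; ring)
  have harg : (∑ j, ((c j + (0:ℝ) * b j) ^ p)) = ∑ j, c j ^ p := by simp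
  rw [harg, hsum, show (2 / p - 1 : ℝ) = 1 / p + (1 / p - 1) by ring,
    Real.rpow_add hS0]
  field_simp

theorem mixed_second_derivative_of_p_norm_squared
    (p : ℝ) (hp : 1 < p) (n : ℕ) (hn : 1 ≤ n)
    (d a b : Fin n → ℝ) (hd : ∀ j, 0 < d j) :
    ContDiffAt ℝ 2
      (fun st : ℝ × ℝ =>
        ((∑ j, (d j + st.1 * a j + st.2 * b j) ^ p) ^ (1 / p)) ^ (2 : ℕ)) (0, 0) ∧
    deriv (fun s : ℝ => deriv (fun t : ℝ =>
        ((∑ j, (d j + s * a j + t * b j) ^ p) ^ (1 / p)) ^ (2 : ℕ)) 0) 0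
      = 2 * (2 - p) * ((∑ j, d j ^ p) ^ (1 / p)) ^ (2 - 2 * p) *
          ((∑ j, d j ^ (p - 1) * a j) * (∑ j, d j ^ (p - 1) * b j))
        + 2 * (p - 1) * ((∑ j, d j ^ p) ^ (1 / p)) ^ (2 - p) *
          ∑ j, d j ^ (p - 2) * a j * b j := by
  have hp0 : (0:ℝ) < p := lt_trans one_pos hp
  have hne : (Finset.univ : Finset (Fin n)).Nonempty := ⟨⟨0, hn⟩, Finset.mem_univ _⟩
  have hS0 : 0 < ∑ j, d j ^ p :=
    Finset.sum_pos (fun j _ => Real.rpow_pos_of_pos (hd j) p) hne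
  constructor
  · -- smoothness
    have hsum : ContDiffAt ℝ 2
        (fun st : ℝ × ℝ => ∑ j, (d j + st.1 * a j + st.2 * b j) ^ p) (0, 0) := by
      apply ContDiffAt.sum
      intro j _
      have haff : ContDiffAt ℝ 2
          (fun st : ℝ × ℝ => d j + st.1 * a j + st.2 * b j) (0, 0) := by
        fun_prop
      have hval : (fun st : ℝ × ℝ => d j + st.1 * a j + st.2 * b j) (0, 0) ≠ 0 := by
        simpa using (hd j).ne'
      exact (Real.contDiffAt_rpow_const_of_ne hval).comp (0, 0) haff
    have hvalS : (fun st : ℝ × ℝ => ∑ j, (d j + st.1 * a j + st.2 * b j) ^ p) (0, 0)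
        ≠ 0 := by
      simpa using hS0.ne'
    have hout : ContDiffAt ℝ 2 (fun x : ℝ => (x ^ (1 / p)) ^ (2 : ℕ))
        ((fun st : ℝ × ℝ => ∑ j, (d j + st.1 * a j + st.2 * b j) ^ p) (0, 0)) :=
      (Real.contDiffAt_rpow_const_of_ne hvalS).pow 2
    exact hout.comp (0, 0) hsum
  · -- derivative computation
    have hev : ∀ᶠ s in nhds (0:ℝ), ∀ j, 0 < d j + s * a j := by
      rw [Filter.eventually_all]
      intro j
      have hcont : ContinuousAt (fun s : ℝ => d j + s * a j) 0 := by fun_prop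
      have h0 : (0:ℝ) < d j + 0 * a j := by simpa using hd j
      exact hcont.eventually (eventually_gt_nhds h0)
    have hEq : (fun s : ℝ => deriv (fun t : ℝ =>
        ((∑ j, (d j + s * a j + t * b j) ^ p) ^ (1 / p)) ^ (2 : ℕ)) 0)
        =ᶠ[nhds 0] (fun s : ℝ =>
          2 * (∑ j, (d j + s * a j) ^ p) ^ (2 / p - 1) *
            ∑ j, (d j + s * a j) ^ (p - 1) * b j) :=
      hev.mono fun s hs =>
        (aux_inner p hp0 hn (fun j => d j + s * a j) b hs).deriv
    rw [Filter.EventuallyEq.deriv_eq hEq]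
    -- now differentiate g
    have hA : HasDerivAt (fun s : ℝ => ∑ j, (d j + s * a j) ^ p)
        (∑ j, p * d j ^ (p - 1) * a j) 0 :=
      HasDerivAt.fun_sum fun j _ => aux_term p (d j) (a j) (hd j).ne'
    have hB : HasDerivAt (fun s : ℝ => ∑ j, (d j + s * a j) ^ (p - 1) * b j)
        (∑ j, ((p - 1) * d j ^ (p - 1 - 1) * a j) * b j) 0 :=
      HasDerivAt.fun_sum fun j _ =>
        (aux_term (p - 1) (d j) (a j) (hd j).ne').mul_const (b j)
    have h3 : HasDerivAt (fun x : ℝ => x ^ (2 / p - 1))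
        ((2 / p - 1) * (∑ j, d j ^ p) ^ (2 / p - 1 - 1))
        ((fun s : ℝ => ∑ j, (d j + s * a j) ^ p) 0) := by
      simpa using Real.hasDerivAt_rpow_const (p := 2 / p - 1) (x := ∑ j, d j ^ p)
        (Or.inl hS0.ne')
    have hArpow : HasDerivAt (fun s : ℝ => (∑ j, (d j + s * a j) ^ p) ^ (2 / p - 1))
        ((2 / p - 1) * (∑ j, d j ^ p) ^ (2 / p - 1 - 1) * ∑ j, p * d j ^ (p - 1) * a j)
        0 := by
      exact h3.comp 0 hA
    have hg := (hArpow.const_mul 2).fun_mul hB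
    rw [hg.deriv]
    have e1 : (∑ j, ((d j + (0:ℝ) * a j) ^ p)) = ∑ j, d j ^ p := by simp
    have e2 : (∑ j, ((d j + (0:ℝ) * a j) ^ (p - 1) * b j)) = ∑ j, d j ^ (p-1) * b j := by
      simp
    have e3 : (∑ j, p * d j ^ (p - 1) * a j) = p * ∑ j, d j ^ (p - 1) * a j := by
      rw [Finset.mul_sum]; exact Finset.sum_congr rfl (by intros; ring)
    have e4 : (∑ j, ((p - 1) * d j ^ (p - 1 - 1) * a j) * b j)
        = (p - 1) * ∑ j, d j ^ (p - 2) * a j * b j := by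
      rw [Finset.mul_sum]
      exact Finset.sum_congr rfl (by intros; rw [show p - 1 - 1 = p - 2 by ring]; ring)
    rw [e1, e2, e3, e4,
      show ((∑ j, d j ^ p) ^ (1 / p)) ^ (2 - 2 * p)
          = (∑ j, d j ^ p) ^ (2 / p - 1 - 1) by
        rw [← Real.rpow_mul hS0.le, show (1 / p) * (2 - 2 * p) = 2 / p - 1 - 1 by
          field_simp; ring],
      show ((∑ j, d j ^ p) ^ (1 / p)) ^ (2 - p)
          = (∑ j, d j ^ p) ^ (2 / p - 1) by
        rw [← Real.rpow_mul hS0.le, show (1 / p) * (2 - p) = 2 / p - 1 by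
          field_simp]]
    field_simp
end
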